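/- Let λ₁ ≤ λ₂ ≤ 1 be real numbers, a ∈ ℝ, b ≥ 0, and θ ∈ (0, ∞). Define ψ(n,m₁,m₂) = 2^{na}·(2^n + 2^{nλ₁} + 2^{nλ₂} + 2^{nλ₁}|m₁| + 2^{nλ₂}|m₂|)^{-b}. Then ∑_{ℤ³} ψ^θ < ∞ if and only if b·θ > 2 and (λ₂ - λ₁)/θ + b·λ₁ < a < (λ₁ + λ₂ - 2)/θ + b. -/

import Mathlib

set_option maxHeartbeats 1000000
open Real Finset

lemma aux_rpow_tangent {s t : ℝ} (hs : 0 ≤ s) (ht : 0 < t) :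
    1 + s * (1 - 1 / t) ≤ t ^ s := by
  have h1 : 1 - 1 / t ≤ Real.log t := by
    have h := Real.log_le_sub_one_of_pos (show (0:ℝ) < t⁻¹ by positivity)
    rw [Real.log_inv] at h
    rw [one_div]; linarith
  have h2 : s * (1 - 1 / t) ≤ s * Real.log t := mul_le_mul_of_nonneg_left h1 hs
  have h3 : Real.log t * s + 1 ≤ Real.exp (Real.log t * s) := Real.add_one_le_exp _
  rw [Real.rpow_def_of_pos ht]
  have h4 : s * Real.log t = Real.log t * s := mul_comm _ _
  linarith

lemma aux_telescope {s u v : ℝ} (hs : 0 < s) (hu : 0 < u) (huv : u ≤ v) :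
    s * (v - u) * v ^ (-s - 1) ≤ u ^ (-s) - v ^ (-s) := by
  have hv : 0 < v := hu.trans_le huv
  have ht : 0 < v / u := by positivity
  have h := aux_rpow_tangent hs.le ht
  have hvs : (0:ℝ) < v ^ (-s) := Real.rpow_pos_of_pos hv _
  have hvsne : (v:ℝ) ^ s ≠ 0 := (Real.rpow_pos_of_pos hv s).ne'
  have husne : (u:ℝ) ^ s ≠ 0 := (Real.rpow_pos_of_pos hu s).ne'
  have e1 : (v/u) ^ s * v ^ (-s) = u ^ (-s) := by
    rw [Real.div_rpow hv.le hu.le, Real.rpow_neg hv.le, Real.rpow_neg hu.le]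
    field_simp
  have h2 := mul_le_mul_of_nonneg_right h hvs.le
  rw [e1] at h2
  have e3 : 1 / (v / u) = u / v := by
    rw [one_div, inv_div]
  rw [e3] at h2
  have e4 : s * (v - u) * v ^ (-s - 1) = s * (1 - u / v) * v ^ (-s) := by
    rw [show -s - 1 = -s + (-1) by ring, Real.rpow_add hv, Real.rpow_neg_one]
    field_simp
  rw [e4]
  nlinarith [h2]




lemma aux_nat_summable {p c B : ℝ} (hp : 1 < p) (hc : 0 < c) (hB : 0 < B) :
    Summable (fun n : ℕ => (c + B * (n:ℝ)) ^ (-p)) := by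
  rw [← summable_nat_add_iff 1]
  have hmaj : Summable (fun n : ℕ => B ^ (-p) * ((n:ℝ) + 1) ^ (-p)) := by
    apply Summable.mul_left
    have h0 : Summable (fun n : ℕ => ((n:ℝ)) ^ (-p)) := by
      have := Real.summable_nat_rpow_inv.2 hp
      refine this.congr (fun n => ?_)
      rw [← Real.rpow_neg (Nat.cast_nonneg n)]
    have := (summable_nat_add_iff (f := fun n : ℕ => ((n:ℝ)) ^ (-p)) 1).2 h0
    refine this.congr (fun n => ?_)
    push_cast
    ring_nf
  apply Summable.of_nonneg_of_le (fun n => by positivity) (fun n => ?_) hmaj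
  have h1 : B * ((n:ℝ) + 1) ≤ c + B * ((n:ℕ) + 1 : ℕ) := by push_cast; nlinarith
  have h2 : (c + B * ((n:ℕ) + 1 : ℕ)) ^ (-p) ≤ (B * ((n:ℝ) + 1)) ^ (-p) :=
    Real.rpow_le_rpow_of_nonpos (by positivity) h1 (by linarith)
  calc (c + B * ((n:ℕ) + 1 : ℕ) : ℝ) ^ (-p) ≤ (B * ((n:ℝ) + 1)) ^ (-p) := h2
    _ = B ^ (-p) * ((n:ℝ) + 1) ^ (-p) := Real.mul_rpow hB.le (by positivity)

lemma aux_nat_summable' {p c B : ℝ} (hp : 1 < p) (hc : 0 < c) (hB : 0 < B) :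
    Summable (fun n : ℕ => (c + B * ((n:ℝ) + 1)) ^ (-p)) := by
  have := (summable_nat_add_iff (f := fun n : ℕ => (c + B * (n:ℝ)) ^ (-p)) 1).2
    (aux_nat_summable hp hc hB)
  refine this.congr (fun n => ?_)
  push_cast
  ring_nf

lemma aux_nat_tsum_le {p c B : ℝ} (hp : 1 < p) (hB : 0 < B) (hBc : B ≤ c) :
    (∑' n : ℕ, (c + B * (n:ℝ)) ^ (-p)) ≤ (p / (p - 1)) * (c ^ (1 - p) / B) := by
  have hc : 0 < c := hB.trans_le hBc
  have hsum := aux_nat_summable hp hc hB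
  rw [Summable.tsum_eq_zero_add hsum]
  have hf0 : (c + B * ((0:ℕ):ℝ)) ^ (-p) = c ^ (-p) := by norm_num
  have htail : (∑' n : ℕ, (c + B * ((n + 1 : ℕ):ℝ)) ^ (-p)) ≤ c ^ (1 - p) / ((p - 1) * B) := by
    apply Real.tsum_le_of_sum_range_le (fun n => by positivity)
    intro N
    have hterm : ∀ n : ℕ, (c + B * ((n + 1 : ℕ):ℝ)) ^ (-p)
        ≤ ((c + B * (n:ℝ)) ^ (1 - p) - (c + B * ((n:ℝ) + 1)) ^ (1 - p)) / ((p - 1) * B) := by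
      intro n
      have h := aux_telescope (s := p - 1) (u := c + B * (n:ℝ)) (v := c + B * ((n:ℝ) + 1))
        (by linarith) (by positivity) (by nlinarith)
      have e1 : c + B * ((n:ℝ) + 1) - (c + B * (n:ℝ)) = B := by ring
      have e2 : -(p - 1) - 1 = -p := by ring
      have e3 : -(p - 1) = 1 - p := by ring
      rw [e1, e2, e3] at h
      rw [le_div_iff₀ (mul_pos (by linarith : (0:ℝ) < p - 1) hB)]
      push_cast
      nlinarith [h]
    calc ∑ n ∈ Finset.range N, (c + B * ((n + 1 : ℕ):ℝ)) ^ (-p)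
        ≤ ∑ n ∈ Finset.range N,
            ((c + B * (n:ℝ)) ^ (1 - p) - (c + B * ((n:ℝ) + 1)) ^ (1 - p)) / ((p - 1) * B) :=
          Finset.sum_le_sum (fun n _ => hterm n)
      _ = (∑ n ∈ Finset.range N,
            ((fun k : ℕ => (c + B * (k:ℝ)) ^ (1 - p)) n
              - (fun k : ℕ => (c + B * (k:ℝ)) ^ (1 - p)) (n + 1))) / ((p - 1) * B) := by
          rw [← Finset.sum_div]
          congr 1
          apply Finset.sum_congr rfl
          intro n _
          push_cast
          ring_nf
      _ = ((c + B * ((0:ℕ):ℝ)) ^ (1 - p) - (c + B * ((N:ℕ):ℝ)) ^ (1 - p)) / ((p - 1) * B) := by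
          rw [Finset.sum_range_sub']
      _ ≤ c ^ (1 - p) / ((p - 1) * B) := by
          rw [div_le_div_iff_of_pos_right (mul_pos (by linarith : (0:ℝ) < p - 1) hB)]
          have : (0:ℝ) ≤ (c + B * ((N:ℕ):ℝ)) ^ (1 - p) := Real.rpow_nonneg (by positivity) _
          norm_num
          linarith
  have h0 : c ^ (-p) ≤ c ^ (1 - p) / B := by
    rw [le_div_iff₀ hB]
    calc c ^ (-p) * B ≤ c ^ (-p) * c := mul_le_mul_of_nonneg_left hBc (Real.rpow_nonneg hc.le _)
      _ = c ^ (1 - p) := by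
        rw [show (1:ℝ) - p = -p + 1 by ring, Real.rpow_add_one hc.ne']
  have hconst : p / (p - 1) * (c ^ (1 - p) / B) = c ^ (1 - p) / B + c ^ (1 - p) / ((p - 1) * B) := by
    have h1 : p - 1 ≠ 0 := by linarith
    field_simp
    ring
  rw [hf0]
  linarith



lemma aux_cast_nat (c B : ℝ) (n : ℕ) : c + B * |((n:ℤ):ℝ)| = c + B * (n:ℝ) := by
  push_cast
  rw [abs_of_nonneg (Nat.cast_nonneg n)]

lemma aux_cast_neg (c B : ℝ) (n : ℕ) :
    c + B * |(((-((n:ℤ) + 1)) : ℤ):ℝ)| = c + B * ((n:ℝ) + 1) := by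
  push_cast
  rw [abs_neg, abs_of_nonneg (by positivity : (0:ℝ) ≤ (n:ℝ) + 1)]

lemma aux_int_summable {p c B : ℝ} (hp : 1 < p) (hc : 0 < c) (hB : 0 < B) :
    Summable (fun m : ℤ => (c + B * |(m:ℝ)|) ^ (-p)) := by
  have h1 : Summable (fun n : ℕ => (c + B * |(((n:ℤ)):ℝ)|) ^ (-p)) :=
    (aux_nat_summable hp hc hB).congr (fun n => by rw [aux_cast_nat])
  have h2 : Summable (fun n : ℕ => (c + B * |(((-((n:ℤ) + 1)) : ℤ):ℝ)|) ^ (-p)) :=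
    (aux_nat_summable' hp hc hB).congr (fun n => by rw [aux_cast_neg])
  exact Summable.of_nat_of_neg_add_one h1 h2

lemma aux_int_tsum_le {p c B : ℝ} (hp : 1 < p) (hB : 0 < B) (hBc : B ≤ c) :
    (∑' m : ℤ, (c + B * |(m:ℝ)|) ^ (-p)) ≤ (2 * (p / (p - 1))) * (c ^ (1 - p) / B) := by
  have hc : 0 < c := hB.trans_le hBc
  have h1 : Summable (fun n : ℕ => ((c + B * |(((n:ℤ)):ℝ)|) ^ (-p))) :=
    (aux_nat_summable hp hc hB).congr (fun n => by rw [aux_cast_nat])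
  have h2 : Summable (fun n : ℕ => ((c + B * |(((-((n:ℤ) + 1)) : ℤ):ℝ)|) ^ (-p))) :=
    (aux_nat_summable' hp hc hB).congr (fun n => by rw [aux_cast_neg])
  rw [tsum_of_nat_of_neg_add_one h1 h2]
  have e1 : (∑' n : ℕ, ((c + B * |(((n:ℤ)):ℝ)|) ^ (-p))) = ∑' n : ℕ, (c + B * (n:ℝ)) ^ (-p) :=
    tsum_congr (fun n => by rw [aux_cast_nat])
  have e2 : (∑' n : ℕ, ((c + B * |(((-((n:ℤ) + 1)) : ℤ):ℝ)|) ^ (-p)))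
      = ∑' n : ℕ, (c + B * ((n:ℝ) + 1)) ^ (-p) :=
    tsum_congr (fun n => by rw [aux_cast_neg])
  have h3 : (∑' n : ℕ, (c + B * ((n:ℝ) + 1)) ^ (-p)) ≤ ∑' n : ℕ, (c + B * (n:ℝ)) ^ (-p) := by
    apply Summable.tsum_le_tsum (fun n => ?_) (aux_nat_summable' hp hc hB) (aux_nat_summable hp hc hB)
    apply Real.rpow_le_rpow_of_nonpos (by positivity) (by nlinarith) (by linarith)
  have h4 := aux_nat_tsum_le hp hB hBc
  rw [e1, e2]
  linarith

lemma aux_int_tsum_ge {p c B : ℝ} (hp : 0 < p) (hB : 0 < B) (hBc : B ≤ c)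
    (hs : Summable (fun m : ℤ => (c + B * |(m:ℝ)|) ^ (-p))) :
    2 ^ (-p) * (c ^ (1 - p) / B) ≤ ∑' m : ℤ, (c + B * |(m:ℝ)|) ^ (-p) := by
  have hc : 0 < c := hB.trans_le hBc
  set N : ℕ := ⌈c / B⌉₊ with hN
  have hinj : Function.Injective (fun n : ℕ => (n:ℤ)) := fun a b h => by
    simpa using h
  have hrest : Summable (fun n : ℕ => (c + B * |(((n:ℤ)):ℝ)|) ^ (-p)) := by
    have := hs.comp_injective hinj
    exact this
  have step1 : (∑' n : ℕ, (c + B * |(((n:ℤ)):ℝ)|) ^ (-p)) ≤ ∑' m : ℤ, (c + B * |(m:ℝ)|) ^ (-p) :=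
    Summable.tsum_le_tsum_of_inj (fun n : ℕ => (n:ℤ)) hinj (fun m _ => by positivity)
      (fun n => le_rfl) hrest hs
  have step2 : (N:ℝ) * (2 * c) ^ (-p) ≤ ∑' n : ℕ, (c + B * |(((n:ℤ)):ℝ)|) ^ (-p) := by
    have hsum_le := Summable.sum_le_tsum (Finset.range N) (fun n _ => by positivity) hrest
    refine le_trans ?_ hsum_le
    have hcard : ∀ n ∈ Finset.range N, (2 * c) ^ (-p) ≤ (c + B * |(((n:ℤ)):ℝ)|) ^ (-p) := by
      intro n hn
      rw [aux_cast_nat]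
      apply Real.rpow_le_rpow_of_nonpos (by positivity) ?_ (by linarith)
      have hn' : (n:ℝ) ≤ (N:ℝ) - 1 := by
        have := Finset.mem_range.1 hn
        have : (n:ℝ) + 1 ≤ (N:ℝ) := by exact_mod_cast this
        linarith
      have hNlt : (N:ℝ) < c / B + 1 := by
        rw [hN]; exact Nat.ceil_lt_add_one (by positivity)
      have : B * (n:ℝ) ≤ c := by
        have hnc : (n:ℝ) ≤ c / B := by linarith
        calc B * (n:ℝ) ≤ B * (c / B) := mul_le_mul_of_nonneg_left hnc hB.le
          _ = c := by field_simp
      linarith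
    have := Finset.card_nsmul_le_sum (Finset.range N)
      (fun n => (c + B * |(((n:ℤ)):ℝ)|) ^ (-p)) ((2 * c) ^ (-p)) hcard
    rw [Finset.card_range, nsmul_eq_mul] at this
    exact this
  have step3 : 2 ^ (-p) * (c ^ (1 - p) / B) ≤ (N:ℝ) * (2 * c) ^ (-p) := by
    have hNge : c / B ≤ (N:ℝ) := Nat.le_ceil _
    have e : ((2:ℝ) * c) ^ (-p) = 2 ^ (-p) * c ^ (-p) := Real.mul_rpow (by norm_num) hc.le
    have e2 : c ^ (1 - p) = c * c ^ (-p) := by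
      rw [show (1:ℝ) - p = -p + 1 by ring, Real.rpow_add_one hc.ne']
      ring
    rw [e, e2]
    calc 2 ^ (-p) * (c * c ^ (-p) / B) = (c / B) * (2 ^ (-p) * c ^ (-p)) := by ring
      _ ≤ (N:ℝ) * (2 ^ (-p) * c ^ (-p)) :=
        mul_le_mul_of_nonneg_right hNge (by positivity)
  linarith

lemma aux_int_not_summable {q c B : ℝ} (hq : q ≤ 1) (hc : 0 < c) (hB : 0 < B) :
    ¬ Summable (fun m : ℤ => (c + B * |(m:ℝ)|) ^ (-q)) := by
  intro h
  have hinj : Function.Injective (fun n : ℕ => -((n:ℤ) + 1)) := fun a b hab => by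
    simp only at hab; omega
  have h1 : Summable (fun n : ℕ => (c + B * ((n:ℝ) + 1)) ^ (-q)) := by
    have := h.comp_injective hinj
    exact this.congr (fun n => by simp only [Function.comp]; rw [aux_cast_neg])
  have h2 : Summable (fun n : ℕ => ((n:ℝ) + 1) ^ (-q)) := by
    rcases le_or_gt q 0 with h0 | h0
    · apply Summable.of_nonneg_of_le (fun n => by positivity) (fun n => ?_) (h1.mul_left (B ^ q))
      have hle : B * ((n:ℝ) + 1) ≤ c + B * ((n:ℝ) + 1) := by linarith
      have := Real.rpow_le_rpow (by positivity) hle (by linarith : 0 ≤ -q)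
      calc ((n:ℝ) + 1) ^ (-q) = (B ^ q * B ^ (-q)) * ((n:ℝ) + 1) ^ (-q) := by
            rw [← Real.rpow_add hB]; norm_num
        _ = B ^ q * (B ^ (-q) * ((n:ℝ) + 1) ^ (-q)) := by ring
        _ ≤ B ^ q * (c + B * ((n:ℝ) + 1)) ^ (-q) := by
            apply mul_le_mul_of_nonneg_left _ (Real.rpow_nonneg hB.le _)
            rw [← Real.mul_rpow hB.le (by positivity)]
            exact this
    · apply Summable.of_nonneg_of_le (fun n => by positivity) (fun n => ?_)
        (h1.mul_left ((c + B) ^ q))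
      have hle : c + B * ((n:ℝ) + 1) ≤ (c + B) * ((n:ℝ) + 1) := by nlinarith [Nat.cast_nonneg (α := ℝ) n]
      have := Real.rpow_le_rpow_of_nonpos (by positivity) hle (by linarith : -q ≤ 0)
      calc ((n:ℝ) + 1) ^ (-q) = ((c + B) ^ q * (c + B) ^ (-q)) * ((n:ℝ) + 1) ^ (-q) := by
            rw [← Real.rpow_add (by positivity)]; norm_num
        _ = (c + B) ^ q * ((c + B) ^ (-q) * ((n:ℝ) + 1) ^ (-q)) := by ring
        _ ≤ (c + B) ^ q * (c + B * ((n:ℝ) + 1)) ^ (-q) := by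
            apply mul_le_mul_of_nonneg_left _ (Real.rpow_nonneg (by positivity) _)
            rw [← Real.mul_rpow (by positivity) (by positivity)]
            exact this
  have h3 : Summable (fun n : ℕ => ((n:ℝ)) ^ (-q)) := by
    apply (summable_nat_add_iff (f := fun n : ℕ => ((n:ℝ)) ^ (-q)) 1).1
    exact h2.congr (fun n => by push_cast; ring_nf)
  have h4 : Summable (fun n : ℕ => (((n:ℝ)) ^ q)⁻¹) :=
    h3.congr (fun n => Real.rpow_neg (Nat.cast_nonneg n) q)
  have := Real.summable_nat_rpow_inv.1 h4
  linarith



lemma aux_amgm {p c x y : ℝ} (hp : 0 ≤ p) (hc : 0 < c) (hx : 0 ≤ x) (hy : 0 ≤ y) :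
    (c + x + y) ^ (-p) ≤ (c + x) ^ (-(p/2)) * (c + y) ^ (-(p/2)) := by
  have h1 : (c + x) * (c + y) ≤ (c + x + y) ^ (2:ℕ) := by nlinarith
  have h2 : (((c + x + y) ^ (2:ℕ) : ℝ)) ^ (-(p/2)) ≤ ((c + x) * (c + y)) ^ (-(p/2)) :=
    Real.rpow_le_rpow_of_nonpos (by positivity) h1 (by linarith)
  calc (c + x + y) ^ (-p) = (((c + x + y) ^ (2:ℕ) : ℝ)) ^ (-(p/2)) := by
        rw [← Real.rpow_natCast (c + x + y) 2, ← Real.rpow_mul (by positivity)]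
        congr 1
        push_cast
        ring
    _ ≤ ((c + x) * (c + y)) ^ (-(p/2)) := h2
    _ = (c + x) ^ (-(p/2)) * (c + y) ^ (-(p/2)) := Real.mul_rpow (by positivity) (by positivity)

lemma aux_prod_lower {p c x y : ℝ} (hp : 0 ≤ p) (hc : 0 < c) (hx : 0 ≤ x) (hy : 0 ≤ y) :
    c ^ p * ((c + x) ^ (-p) * (c + y) ^ (-p)) ≤ (c + x + y) ^ (-p) := by
  have h1 : c * (c + x + y) ≤ (c + x) * (c + y) := by nlinarith
  have h2 : ((c + x) * (c + y)) ^ (-p) ≤ (c * (c + x + y)) ^ (-p) :=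
    Real.rpow_le_rpow_of_nonpos (by positivity) h1 (by linarith)
  have h3 : ((c : ℝ) * (c + x + y)) ^ (-p) = c ^ (-p) * (c + x + y) ^ (-p) :=
    Real.mul_rpow hc.le (by positivity)
  have h4 : ((c + x) * (c + y)) ^ (-p) = (c + x) ^ (-p) * (c + y) ^ (-p) :=
    Real.mul_rpow (by positivity) (by positivity)
  have h5 : c ^ p * c ^ (-p) = 1 := by
    rw [← Real.rpow_add hc]; norm_num
  calc c ^ p * ((c + x) ^ (-p) * (c + y) ^ (-p)) = c ^ p * (((c + x) * (c + y)) ^ (-p)) := by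
        rw [h4]
    _ ≤ c ^ p * ((c * (c + x + y)) ^ (-p)) :=
        mul_le_mul_of_nonneg_left h2 (Real.rpow_nonneg hc.le _)
    _ = (c ^ p * c ^ (-p)) * (c + x + y) ^ (-p) := by rw [h3]; ring
    _ = (c + x + y) ^ (-p) := by rw [h5, one_mul]

lemma aux_2d_summable {p c B C : ℝ} (hp : 2 < p) (hB : 0 < B) (hC : 0 < C)
    (hBc : B ≤ c) (hCc : C ≤ c) :
    Summable (fun m : ℤ × ℤ => (c + B * |(m.1:ℝ)| + C * |(m.2:ℝ)|) ^ (-p)) := by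
  have hc : 0 < c := hB.trans_le hBc
  have hq : 1 < p / 2 := by linarith
  have hs1 := aux_int_summable hq hc hB
  have hs2 := aux_int_summable hq hc hC
  apply Summable.of_nonneg_of_le (fun m => by positivity) (fun m => ?_)
    (hs1.mul_of_nonneg hs2 (fun m => by positivity) (fun m => by positivity))
  exact aux_amgm (by linarith) hc (by positivity) (by positivity)

lemma aux_prod_tsum_eq {f g : ℤ → ℝ} (hf0 : ∀ m, 0 ≤ f m) (hg0 : ∀ m, 0 ≤ g m)
    (hf : Summable f) (hg : Summable g) :
    (∑' m : ℤ × ℤ, f m.1 * g m.2) = (∑' m : ℤ, f m) * (∑' m : ℤ, g m) := by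
  refine (tsum_mul_tsum_of_summable_norm ?_ ?_).symm
  · exact hf.abs.congr (fun m => by rw [Real.norm_eq_abs])
  · exact hg.abs.congr (fun m => by rw [Real.norm_eq_abs])

lemma aux_2d_tsum_le {p c B C : ℝ} (hp : 2 < p) (hB : 0 < B) (hC : 0 < C)
    (hBc : B ≤ c) (hCc : C ≤ c) :
    (∑' m : ℤ × ℤ, (c + B * |(m.1:ℝ)| + C * |(m.2:ℝ)|) ^ (-p))
      ≤ (2 * ((p/2) / (p/2 - 1))) ^ 2 * (c ^ (2 - p) / (B * C)) := by
  have hc : 0 < c := hB.trans_le hBc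
  have hq : 1 < p / 2 := by linarith
  have hs1 := aux_int_summable hq hc hB
  have hs2 := aux_int_summable hq hc hC
  have hprod := hs1.mul_of_nonneg hs2 (fun m => by positivity) (fun m => by positivity)
  have h1 : (∑' m : ℤ × ℤ, (c + B * |(m.1:ℝ)| + C * |(m.2:ℝ)|) ^ (-p))
      ≤ ∑' m : ℤ × ℤ, (c + B * |(m.1:ℝ)|) ^ (-(p/2)) * (c + C * |(m.2:ℝ)|) ^ (-(p/2)) := by
    apply Summable.tsum_le_tsum (fun m => aux_amgm (by linarith) hc (by positivity) (by positivity))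
      (aux_2d_summable hp hB hC hBc hCc) hprod
  have h2 := aux_prod_tsum_eq (f := fun m : ℤ => (c + B * |(m:ℝ)|) ^ (-(p/2)))
    (g := fun m : ℤ => (c + C * |(m:ℝ)|) ^ (-(p/2)))
    (fun m => by positivity) (fun m => by positivity) hs1 hs2
  have h3 := aux_int_tsum_le hq hB hBc
  have h4 := aux_int_tsum_le hq hC hCc
  have e : -(p/2) = -(p/2) := rfl
  have hmul : (∑' m : ℤ, (c + B * |(m:ℝ)|) ^ (-(p/2))) * (∑' m : ℤ, (c + C * |(m:ℝ)|) ^ (-(p/2)))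
      ≤ (2 * ((p/2) / (p/2 - 1))) ^ 2 * (c ^ (2 - p) / (B * C)) := by
    have t1 : (0:ℝ) ≤ ∑' m : ℤ, (c + B * |(m:ℝ)|) ^ (-(p/2)) :=
      tsum_nonneg (fun m => by positivity)
    have hKpos : (0:ℝ) ≤ 2 * ((p/2) / (p/2 - 1)) := by
      apply mul_nonneg (by norm_num)
      apply div_nonneg (by linarith) (by linarith)
    have hcc : c ^ (1 - p/2) * c ^ (1 - p/2) = c ^ (2 - p) := by
      rw [← Real.rpow_add hc]; ring_nf
    calc (∑' m : ℤ, (c + B * |(m:ℝ)|) ^ (-(p/2))) * (∑' m : ℤ, (c + C * |(m:ℝ)|) ^ (-(p/2)))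
        ≤ ((2 * ((p/2) / (p/2 - 1))) * (c ^ (1 - p/2) / B))
            * ((2 * ((p/2) / (p/2 - 1))) * (c ^ (1 - p/2) / C)) := by
          apply mul_le_mul h3 h4 (tsum_nonneg (fun m => by positivity)) (by positivity)
      _ = (2 * ((p/2) / (p/2 - 1))) ^ 2 * ((c ^ (1 - p/2) * c ^ (1 - p/2)) / (B * C)) := by
          ring
      _ = (2 * ((p/2) / (p/2 - 1))) ^ 2 * (c ^ (2 - p) / (B * C)) := by rw [hcc]
  calc (∑' m : ℤ × ℤ, (c + B * |(m.1:ℝ)| + C * |(m.2:ℝ)|) ^ (-p))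
      ≤ ∑' m : ℤ × ℤ, (c + B * |(m.1:ℝ)|) ^ (-(p/2)) * (c + C * |(m.2:ℝ)|) ^ (-(p/2)) := h1
    _ = (∑' m : ℤ, (c + B * |(m:ℝ)|) ^ (-(p/2))) * (∑' m : ℤ, (c + C * |(m:ℝ)|) ^ (-(p/2))) := h2
    _ ≤ _ := hmul

lemma aux_2d_tsum_ge {p c B C : ℝ} (hp : 2 < p) (hB : 0 < B) (hC : 0 < C)
    (hBc : B ≤ c) (hCc : C ≤ c) :
    4 ^ (-p) * (c ^ (2 - p) / (B * C))
      ≤ ∑' m : ℤ × ℤ, (c + B * |(m.1:ℝ)| + C * |(m.2:ℝ)|) ^ (-p) := by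
  have hc : 0 < c := hB.trans_le hBc
  have hp1 : 1 < p := by linarith
  have hs1 := aux_int_summable hp1 hc hB
  have hs2 := aux_int_summable hp1 hc hC
  have hprod := hs1.mul_of_nonneg hs2 (fun m => by positivity) (fun m => by positivity)
  have h1 : (∑' m : ℤ × ℤ, c ^ p * ((c + B * |(m.1:ℝ)|) ^ (-p) * (c + C * |(m.2:ℝ)|) ^ (-p)))
      ≤ ∑' m : ℤ × ℤ, (c + B * |(m.1:ℝ)| + C * |(m.2:ℝ)|) ^ (-p) := by
    apply Summable.tsum_le_tsum (fun m => aux_prod_lower (by linarith) hc (by positivity) (by positivity))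
      (hprod.mul_left _) (aux_2d_summable hp hB hC hBc hCc)
  have h2 : (∑' m : ℤ × ℤ, c ^ p * ((c + B * |(m.1:ℝ)|) ^ (-p) * (c + C * |(m.2:ℝ)|) ^ (-p)))
      = c ^ p * ((∑' m : ℤ, (c + B * |(m:ℝ)|) ^ (-p)) * (∑' m : ℤ, (c + C * |(m:ℝ)|) ^ (-p))) := by
    rw [tsum_mul_left]
    congr 1
    exact aux_prod_tsum_eq (fun m => by positivity) (fun m => by positivity) hs1 hs2
  have h3 := aux_int_tsum_ge (by linarith : 0 < p) hB hBc hs1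
  have h4 := aux_int_tsum_ge (by linarith : 0 < p) hC hCc hs2
  have key : 4 ^ (-p) * (c ^ (2 - p) / (B * C))
      ≤ c ^ p * ((∑' m : ℤ, (c + B * |(m:ℝ)|) ^ (-p)) * (∑' m : ℤ, (c + C * |(m:ℝ)|) ^ (-p))) := by
    have e1 : (4:ℝ) ^ (-p) = 2 ^ (-p) * 2 ^ (-p) := by
      rw [← Real.mul_rpow (by norm_num) (by norm_num)]
      norm_num
    have e2 : c ^ p * (c ^ (1 - p) * c ^ (1 - p)) = c ^ (2 - p) := by
      rw [← Real.rpow_add hc, ← Real.rpow_add hc]; ring_nf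
    calc 4 ^ (-p) * (c ^ (2 - p) / (B * C))
        = c ^ p * ((2 ^ (-p) * (c ^ (1 - p) / B)) * (2 ^ (-p) * (c ^ (1 - p) / C))) := by
          rw [e1, ← e2]; ring
      _ ≤ c ^ p * ((∑' m : ℤ, (c + B * |(m:ℝ)|) ^ (-p)) * (∑' m : ℤ, (c + C * |(m:ℝ)|) ^ (-p))) := by
          apply mul_le_mul_of_nonneg_left _ (Real.rpow_nonneg hc.le _)
          apply mul_le_mul h3 h4 (by positivity) (tsum_nonneg (fun m => by positivity))
  calc 4 ^ (-p) * (c ^ (2 - p) / (B * C)) ≤ _ := key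
    _ = _ := h2.symm
    _ ≤ _ := h1

lemma aux_2d_not_summable {p c B C : ℝ} (hple : p ≤ 2) (hB : 0 < B) (hC : 0 < C)
    (hBc : B ≤ c) (hCc : C ≤ c) :
    ¬ Summable (fun m : ℤ × ℤ => (c + B * |(m.1:ℝ)| + C * |(m.2:ℝ)|) ^ (-p)) := by
  intro h
  have hc : 0 < c := hB.trans_le hBc
  rcases le_or_gt p 1 with hp1 | hp1
  · have hs := h.comp_injective (i := fun m₂ : ℤ => ((0:ℤ), m₂))
      (fun x y hxy => (Prod.ext_iff.1 hxy).2)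
    apply aux_int_not_summable hp1 hc hC
    exact hs.congr (fun m => by
      simp only [Function.comp_apply, Int.cast_zero, abs_zero, mul_zero, add_zero])
  · have hsplit := (summable_prod_of_nonneg (fun m => by positivity)).1 h
    have hinner : ∀ m₁ : ℤ, 2 ^ (-p) * ((c + B * |(m₁:ℝ)|) ^ (1 - p) / C)
        ≤ ∑' m₂ : ℤ, (c + B * |(m₁:ℝ)| + C * |(m₂:ℝ)|) ^ (-p) := by
      intro m₁
      exact aux_int_tsum_ge (by linarith : 0 < p) hC
        (hCc.trans (le_add_of_nonneg_right (by positivity))) (hsplit.1 m₁)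
    have hsum1 : Summable (fun m₁ : ℤ => (c + B * |(m₁:ℝ)|) ^ (-(p - 1))) := by
      apply Summable.of_nonneg_of_le (fun m => by positivity) (fun m₁ => ?_)
        ((hsplit.2).mul_left (C * 2 ^ p))
      have h1 := hinner m₁
      have h22 : (2:ℝ) ^ p * 2 ^ (-p) = 1 := by rw [← Real.rpow_add two_pos]; norm_num
      have e : (C * (2:ℝ) ^ p) * (2 ^ (-p) * ((c + B * |(m₁:ℝ)|) ^ (1 - p) / C))
          = (c + B * |(m₁:ℝ)|) ^ (1 - p) := by
        field_simp
        linear_combination h22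
      rw [show -(p - 1) = 1 - p by ring, ← e]
      apply mul_le_mul_of_nonneg_left h1 (by positivity)
    exact aux_int_not_summable (by linarith : p - 1 ≤ 1) hc hB hsum1


lemma aux_D_iff (l1 l2 A p : ℝ) (h12 : l1 ≤ l2) (h2 : l2 ≤ 1) (hp : 2 < p) :
    Summable (fun n : ℤ => (2:ℝ) ^ ((n:ℝ) * A) *
      (((2:ℝ) ^ ((n:ℝ)) + 2 ^ ((n:ℝ) * l1) + 2 ^ ((n:ℝ) * l2)) ^ (2 - p)
        / (2 ^ ((n:ℝ) * l1) * 2 ^ ((n:ℝ) * l2))))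
    ↔ (A + (2 - p) - l1 - l2 < 0 ∧ 0 < A + (2 - p) * l1 - l1 - l2) := by
  set D : ℤ → ℝ := fun n : ℤ => (2:ℝ) ^ ((n:ℝ) * A) *
      (((2:ℝ) ^ ((n:ℝ)) + 2 ^ ((n:ℝ) * l1) + 2 ^ ((n:ℝ) * l2)) ^ (2 - p)
        / (2 ^ ((n:ℝ) * l1) * 2 ^ ((n:ℝ) * l2))) with hD
  have hD0 : ∀ n : ℤ, 0 < D n := fun n => by rw [hD]; positivity
  have main : ∀ t w : ℝ,
      (2:ℝ) ^ w ≤ (2:ℝ) ^ t + (2:ℝ) ^ (t * l1) + (2:ℝ) ^ (t * l2) →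
      (2:ℝ) ^ t + (2:ℝ) ^ (t * l1) + (2:ℝ) ^ (t * l2) ≤ 3 * (2:ℝ) ^ w →
      (3:ℝ) ^ (2 - p) * (2:ℝ) ^ (t * A + w * (2 - p) - t * l1 - t * l2)
          ≤ (2:ℝ) ^ (t * A) * (((2:ℝ) ^ t + (2:ℝ) ^ (t * l1) + (2:ℝ) ^ (t * l2)) ^ (2 - p)
              / ((2:ℝ) ^ (t * l1) * (2:ℝ) ^ (t * l2)))
        ∧ (2:ℝ) ^ (t * A) * (((2:ℝ) ^ t + (2:ℝ) ^ (t * l1) + (2:ℝ) ^ (t * l2)) ^ (2 - p)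
              / ((2:ℝ) ^ (t * l1) * (2:ℝ) ^ (t * l2)))
          ≤ (2:ℝ) ^ (t * A + w * (2 - p) - t * l1 - t * l2) := by
    intro t w h1 h3
    have hM : (0:ℝ) < 2 ^ t + 2 ^ (t * l1) + 2 ^ (t * l2) := by positivity
    have hup : (2 ^ t + 2 ^ (t * l1) + 2 ^ (t * l2)) ^ (2 - p) ≤ ((2:ℝ) ^ w) ^ (2 - p) :=
      Real.rpow_le_rpow_of_nonpos (by positivity) h1 (by linarith)
    have hlo : ((3:ℝ) * 2 ^ w) ^ (2 - p) ≤ (2 ^ t + 2 ^ (t * l1) + 2 ^ (t * l2)) ^ (2 - p) :=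
      Real.rpow_le_rpow_of_nonpos hM h3 (by linarith)
    have e1 : (2:ℝ) ^ (t * A + w * (2 - p) - t * l1 - t * l2)
        = 2 ^ (t * A) * (((2:ℝ) ^ w) ^ (2 - p) / (2 ^ (t * l1) * 2 ^ (t * l2))) := by
      rw [← Real.rpow_mul (by norm_num : (0:ℝ) ≤ 2) w (2 - p),
        ← Real.rpow_add two_pos (t * l1) (t * l2), ← Real.rpow_sub two_pos,
        ← Real.rpow_add two_pos]
      congr 1
      ring
    have e2 : ((3:ℝ) * 2 ^ w) ^ (2 - p) = 3 ^ (2 - p) * ((2:ℝ) ^ w) ^ (2 - p) :=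
      Real.mul_rpow (by norm_num) (by positivity)
    constructor
    · calc 3 ^ (2 - p) * 2 ^ (t * A + w * (2 - p) - t * l1 - t * l2)
          = 2 ^ (t * A) * ((3 ^ (2 - p) * ((2:ℝ) ^ w) ^ (2 - p)) / (2 ^ (t * l1) * 2 ^ (t * l2))) := by
            rw [e1]; ring
        _ = 2 ^ (t * A) * (((3:ℝ) * 2 ^ w) ^ (2 - p) / (2 ^ (t * l1) * 2 ^ (t * l2))) := by
            rw [e2]
        _ ≤ 2 ^ (t * A) * ((2 ^ t + 2 ^ (t * l1) + 2 ^ (t * l2)) ^ (2 - p)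
              / (2 ^ (t * l1) * 2 ^ (t * l2))) := by gcongr
    · rw [e1]
      gcongr
  have hnat : ∀ n : ℕ,
      3 ^ (2 - p) * ((2:ℝ) ^ (A + (2 - p) - l1 - l2)) ^ n ≤ D (n:ℤ)
        ∧ D (n:ℤ) ≤ ((2:ℝ) ^ (A + (2 - p) - l1 - l2)) ^ n := by
    intro n
    have t0 : (0:ℝ) ≤ (n:ℝ) := Nat.cast_nonneg n
    have hb1 : (2:ℝ) ^ ((n:ℝ)) ≤ 2 ^ ((n:ℝ)) + 2 ^ ((n:ℝ) * l1) + 2 ^ ((n:ℝ) * l2) := by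
      have := Real.rpow_pos_of_pos two_pos ((n:ℝ) * l1)
      have := Real.rpow_pos_of_pos two_pos ((n:ℝ) * l2)
      linarith
    have hb2 : (2:ℝ) ^ ((n:ℝ)) + 2 ^ ((n:ℝ) * l1) + 2 ^ ((n:ℝ) * l2) ≤ 3 * 2 ^ ((n:ℝ)) := by
      have c1 : (2:ℝ) ^ ((n:ℝ) * l1) ≤ 2 ^ ((n:ℝ)) :=
        Real.rpow_le_rpow_of_exponent_le one_le_two (by nlinarith)
      have c2 : (2:ℝ) ^ ((n:ℝ) * l2) ≤ 2 ^ ((n:ℝ)) :=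
        Real.rpow_le_rpow_of_exponent_le one_le_two (by nlinarith)
      linarith
    have h := main (n:ℝ) (n:ℝ) hb1 hb2
    have eexp : (n:ℝ) * A + (n:ℝ) * (2 - p) - (n:ℝ) * l1 - (n:ℝ) * l2
        = (A + (2 - p) - l1 - l2) * (n:ℝ) := by ring
    have egeo : (2:ℝ) ^ ((A + (2 - p) - l1 - l2) * (n:ℝ))
        = ((2:ℝ) ^ (A + (2 - p) - l1 - l2)) ^ n := by
      rw [Real.rpow_mul (by norm_num), Real.rpow_natCast]
    rw [eexp, egeo] at h
    have hcast : D (n:ℤ) = 2 ^ ((n:ℝ) * A) *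
        (((2:ℝ) ^ ((n:ℝ)) + 2 ^ ((n:ℝ) * l1) + 2 ^ ((n:ℝ) * l2)) ^ (2 - p)
          / (2 ^ ((n:ℝ) * l1) * 2 ^ ((n:ℝ) * l2))) := by
      rw [hD]
      push_cast
      rfl
    rw [hcast]
    exact h
  have hneg : ∀ n : ℕ,
      3 ^ (2 - p) * ((2:ℝ) ^ (-(A + (2 - p) * l1 - l1 - l2))) ^ (n + 1) ≤ D (-((n:ℤ) + 1))
        ∧ D (-((n:ℤ) + 1)) ≤ ((2:ℝ) ^ (-(A + (2 - p) * l1 - l1 - l2))) ^ (n + 1) := by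
    intro n
    set t : ℝ := -((n:ℝ) + 1) with hT
    have t0 : t ≤ 0 := by rw [hT]; push_cast; nlinarith [Nat.cast_nonneg (α := ℝ) n]
    have hb1 : (2:ℝ) ^ (t * l1) ≤ 2 ^ t + 2 ^ (t * l1) + 2 ^ (t * l2) := by
      have := Real.rpow_pos_of_pos two_pos t
      have := Real.rpow_pos_of_pos two_pos (t * l2)
      linarith
    have hb2 : (2:ℝ) ^ t + 2 ^ (t * l1) + 2 ^ (t * l2) ≤ 3 * 2 ^ (t * l1) := by
      have c1 : (2:ℝ) ^ t ≤ 2 ^ (t * l1) :=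
        Real.rpow_le_rpow_of_exponent_le one_le_two (by nlinarith)
      have c2 : (2:ℝ) ^ (t * l2) ≤ 2 ^ (t * l1) :=
        Real.rpow_le_rpow_of_exponent_le one_le_two (by nlinarith)
      linarith
    have h := main t (t * l1) hb1 hb2
    have eexp : t * A + (t * l1) * (2 - p) - t * l1 - t * l2
        = (-(A + (2 - p) * l1 - l1 - l2)) * (((n + 1 : ℕ)):ℝ) := by
      rw [hT]; push_cast; ring
    have egeo : (2:ℝ) ^ ((-(A + (2 - p) * l1 - l1 - l2)) * (((n + 1 : ℕ)):ℝ))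
        = ((2:ℝ) ^ (-(A + (2 - p) * l1 - l1 - l2))) ^ (n + 1) := by
      rw [Real.rpow_mul (by norm_num), Real.rpow_natCast]
    rw [eexp, egeo] at h
    have hcast : D (-((n:ℤ) + 1)) = 2 ^ (t * A) *
        (((2:ℝ) ^ t + 2 ^ (t * l1) + 2 ^ (t * l2)) ^ (2 - p)
          / (2 ^ (t * l1) * 2 ^ (t * l2))) := by
      rw [hD, hT]
      push_cast
      norm_num
    rw [hcast]
    exact h
  constructor
  · intro hDsum
    have h33 : (3:ℝ) ^ (p - 2) * 3 ^ (2 - p) = 1 := by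
      rw [← Real.rpow_add (by norm_num : (0:ℝ) < 3)]; norm_num
    constructor
    · have hres : Summable (fun n : ℕ => D ((n:ℤ))) :=
        hDsum.comp_injective (fun a b h => by simpa using h)
      have hgeo : Summable (fun n : ℕ => ((2:ℝ) ^ (A + (2 - p) - l1 - l2)) ^ n) := by
        apply Summable.of_nonneg_of_le (fun n => by positivity) (fun n => ?_)
          (hres.mul_left (3 ^ (p - 2)))
        calc ((2:ℝ) ^ (A + (2 - p) - l1 - l2)) ^ n
            = 3 ^ (p - 2) * (3 ^ (2 - p) * ((2:ℝ) ^ (A + (2 - p) - l1 - l2)) ^ n) := by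
              rw [← mul_assoc, h33, one_mul]
          _ ≤ 3 ^ (p - 2) * D ((n:ℤ)) :=
              mul_le_mul_of_nonneg_left (hnat n).1 (Real.rpow_nonneg (by norm_num) _)
      have hlt := summable_geometric_iff_norm_lt_one.1 hgeo
      rw [Real.norm_eq_abs, abs_of_pos (Real.rpow_pos_of_pos two_pos _)] at hlt
      by_contra hge
      push_neg at hge
      have h1 : (1:ℝ) = 2 ^ (0:ℝ) := by norm_num
      have := Real.rpow_le_rpow_of_exponent_le one_le_two hge
      rw [Real.rpow_zero] at this
      linarith
    · have hres : Summable (fun n : ℕ => D (-((n:ℤ) + 1))) :=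
        hDsum.comp_injective (fun a b h => by omega)
      have hgeo1 : Summable (fun n : ℕ => ((2:ℝ) ^ (-(A + (2 - p) * l1 - l1 - l2))) ^ (n + 1)) := by
        apply Summable.of_nonneg_of_le (fun n => by positivity) (fun n => ?_)
          (hres.mul_left (3 ^ (p - 2)))
        calc ((2:ℝ) ^ (-(A + (2 - p) * l1 - l1 - l2))) ^ (n + 1)
            = 3 ^ (p - 2) * (3 ^ (2 - p) * ((2:ℝ) ^ (-(A + (2 - p) * l1 - l1 - l2))) ^ (n + 1)) := by
              rw [← mul_assoc, h33, one_mul]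
          _ ≤ 3 ^ (p - 2) * D (-((n:ℤ) + 1)) :=
              mul_le_mul_of_nonneg_left (hneg n).1 (Real.rpow_nonneg (by norm_num) _)
      have hgeo : Summable (fun n : ℕ => ((2:ℝ) ^ (-(A + (2 - p) * l1 - l1 - l2))) ^ n) :=
        (summable_nat_add_iff
          (f := fun n : ℕ => ((2:ℝ) ^ (-(A + (2 - p) * l1 - l1 - l2))) ^ n) 1).1 hgeo1
      have hlt := summable_geometric_iff_norm_lt_one.1 hgeo
      rw [Real.norm_eq_abs, abs_of_pos (Real.rpow_pos_of_pos two_pos _)] at hlt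
      by_contra hge
      push_neg at hge
      have := Real.rpow_le_rpow_of_exponent_le one_le_two
        (by linarith : (0:ℝ) ≤ -(A + (2 - p) * l1 - l1 - l2))
      rw [Real.rpow_zero] at this
      linarith
  · rintro ⟨hα, hβ⟩
    apply Summable.of_nat_of_neg_add_one
    · apply Summable.of_nonneg_of_le (fun n => (hD0 _).le) (fun n => (hnat n).2)
      exact summable_geometric_of_lt_one (by positivity)
        (Real.rpow_lt_one_of_one_lt_of_neg one_lt_two hα)
    · apply Summable.of_nonneg_of_le (fun n => (hD0 _).le) (fun n => (hneg n).2)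
      have hr : ((2:ℝ) ^ (-(A + (2 - p) * l1 - l1 - l2))) < 1 :=
        Real.rpow_lt_one_of_one_lt_of_neg one_lt_two (by linarith)
      have := (summable_geometric_of_lt_one (by positivity) hr).mul_right
        ((2:ℝ) ^ (-(A + (2 - p) * l1 - l1 - l2)))
      exact this.congr (fun n => by rw [← pow_succ])


noncomputable def shearPsi (l1 l2 a b : ℝ) (n m₁ m₂ : ℤ) : ℝ :=
  (2 : ℝ) ^ ((n : ℝ) * a) *
    ((2 : ℝ) ^ (n : ℝ) + (2 : ℝ) ^ ((n : ℝ) * l1) + (2 : ℝ) ^ ((n : ℝ) * l2)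
      + (2 : ℝ) ^ ((n : ℝ) * l1) * |(m₁ : ℝ)| + (2 : ℝ) ^ ((n : ℝ) * l2) * |(m₂ : ℝ)|) ^ (-b)

theorem shearPsi_summable_iff_case2 (l1 l2 a b θ : ℝ) (h12 : l1 ≤ l2) (h2 : l2 ≤ 1)
    (hb : 0 ≤ b) (hθ : 0 < θ) :
    Summable (fun p : ℤ × ℤ × ℤ => (shearPsi l1 l2 a b p.1 p.2.1 p.2.2) ^ θ) ↔
      (2 < b * θ ∧ (l2 - l1) / θ + b * l1 < a ∧ a < (l1 + l2 - 2) / θ + b) := by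
  have hfun : (fun q : ℤ × ℤ × ℤ => (shearPsi l1 l2 a b q.1 q.2.1 q.2.2) ^ θ)
      = fun q : ℤ × ℤ × ℤ => (2:ℝ) ^ ((q.1:ℝ) * (a * θ)) *
        ((2:ℝ) ^ ((q.1:ℝ)) + (2:ℝ) ^ ((q.1:ℝ) * l1) + (2:ℝ) ^ ((q.1:ℝ) * l2)
          + (2:ℝ) ^ ((q.1:ℝ) * l1) * |(q.2.1:ℝ)|
          + (2:ℝ) ^ ((q.1:ℝ) * l2) * |(q.2.2:ℝ)|) ^ (-(b * θ)) := by
    funext q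
    unfold shearPsi
    rw [Real.mul_rpow (by positivity) (by positivity),
      ← Real.rpow_mul (by norm_num : (0:ℝ) ≤ 2),
      ← Real.rpow_mul (by positivity)]
    rw [show ((q.1:ℝ) * a) * θ = (q.1:ℝ) * (a * θ) by ring,
      show (-b) * θ = -(b * θ) by ring]
  rw [hfun]
  have hg0 : ∀ q : ℤ × ℤ × ℤ, 0 ≤ (2:ℝ) ^ ((q.1:ℝ) * (a * θ)) *
        ((2:ℝ) ^ ((q.1:ℝ)) + (2:ℝ) ^ ((q.1:ℝ) * l1) + (2:ℝ) ^ ((q.1:ℝ) * l2)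
          + (2:ℝ) ^ ((q.1:ℝ) * l1) * |(q.2.1:ℝ)|
          + (2:ℝ) ^ ((q.1:ℝ) * l2) * |(q.2.2:ℝ)|) ^ (-(b * θ)) := fun q => by positivity
  have hBle : ∀ n : ℤ, (2:ℝ) ^ ((n:ℝ) * l1)
      ≤ (2:ℝ) ^ ((n:ℝ)) + (2:ℝ) ^ ((n:ℝ) * l1) + (2:ℝ) ^ ((n:ℝ) * l2) := fun n => by
    have := Real.rpow_pos_of_pos two_pos ((n:ℝ))
    have := Real.rpow_pos_of_pos two_pos ((n:ℝ) * l2)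
    linarith
  have hCle : ∀ n : ℤ, (2:ℝ) ^ ((n:ℝ) * l2)
      ≤ (2:ℝ) ^ ((n:ℝ)) + (2:ℝ) ^ ((n:ℝ) * l1) + (2:ℝ) ^ ((n:ℝ) * l2) := fun n => by
    have := Real.rpow_pos_of_pos two_pos ((n:ℝ))
    have := Real.rpow_pos_of_pos two_pos ((n:ℝ) * l1)
    linarith
  constructor
  · intro h
    have hp2 : 2 < b * θ := by
      by_contra hle
      push_neg at hle
      have hs := h.comp_injective (i := fun m : ℤ × ℤ => ((0:ℤ), m))
        (fun x y hxy => (Prod.ext_iff.1 hxy).2)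
      have hs2 : Summable (fun m : ℤ × ℤ =>
          ((3:ℝ) + 1 * |(m.1:ℝ)| + 1 * |(m.2:ℝ)|) ^ (-(b * θ))) := by
        refine hs.congr (fun m => ?_)
        simp only [Function.comp_apply, Int.cast_zero, zero_mul, Real.rpow_zero, one_mul]
        norm_num
      exact aux_2d_not_summable hle one_pos one_pos (by norm_num) (by norm_num) hs2
    have hsplit := (summable_prod_of_nonneg hg0).1 h
    have hG := hsplit.2
    have hD : Summable (fun n : ℤ => (2:ℝ) ^ ((n:ℝ) * (a * θ)) *
        (((2:ℝ) ^ ((n:ℝ)) + 2 ^ ((n:ℝ) * l1) + 2 ^ ((n:ℝ) * l2)) ^ (2 - b * θ)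
          / (2 ^ ((n:ℝ) * l1) * 2 ^ ((n:ℝ) * l2)))) := by
      apply Summable.of_nonneg_of_le (fun n => by positivity) (fun n => ?_)
        (hG.mul_left ((4:ℝ) ^ (b * θ)))
      have hge := aux_2d_tsum_ge (p := b * θ)
        (c := (2:ℝ) ^ ((n:ℝ)) + (2:ℝ) ^ ((n:ℝ) * l1) + (2:ℝ) ^ ((n:ℝ) * l2))
        (B := (2:ℝ) ^ ((n:ℝ) * l1)) (C := (2:ℝ) ^ ((n:ℝ) * l2))
        hp2 (by positivity) (by positivity) (hBle n) (hCle n)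
      have e1 : (∑' m : ℤ × ℤ, (2:ℝ) ^ ((n:ℝ) * (a * θ)) *
          ((2:ℝ) ^ ((n:ℝ)) + (2:ℝ) ^ ((n:ℝ) * l1) + (2:ℝ) ^ ((n:ℝ) * l2)
            + (2:ℝ) ^ ((n:ℝ) * l1) * |(m.1:ℝ)|
            + (2:ℝ) ^ ((n:ℝ) * l2) * |(m.2:ℝ)|) ^ (-(b * θ)))
          = (2:ℝ) ^ ((n:ℝ) * (a * θ)) * ∑' m : ℤ × ℤ,
            ((2:ℝ) ^ ((n:ℝ)) + (2:ℝ) ^ ((n:ℝ) * l1) + (2:ℝ) ^ ((n:ℝ) * l2)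
              + (2:ℝ) ^ ((n:ℝ) * l1) * |(m.1:ℝ)|
              + (2:ℝ) ^ ((n:ℝ) * l2) * |(m.2:ℝ)|) ^ (-(b * θ)) := tsum_mul_left
      have h44 : (4:ℝ) ^ (b * θ) * 4 ^ (-(b * θ)) = 1 := by
        rw [← Real.rpow_add (by norm_num : (0:ℝ) < 4)]; norm_num
      rw [e1]
      have hstep := mul_le_mul_of_nonneg_left hge
        (Real.rpow_nonneg (by norm_num : (0:ℝ) ≤ 2) ((n:ℝ) * (a * θ)))
      have hstep2 := mul_le_mul_of_nonneg_left hstep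
        (Real.rpow_nonneg (by norm_num : (0:ℝ) ≤ 4) (b * θ))
      calc (2:ℝ) ^ ((n:ℝ) * (a * θ)) *
          (((2:ℝ) ^ ((n:ℝ)) + 2 ^ ((n:ℝ) * l1) + 2 ^ ((n:ℝ) * l2)) ^ (2 - b * θ)
            / (2 ^ ((n:ℝ) * l1) * 2 ^ ((n:ℝ) * l2)))
          = (4:ℝ) ^ (b * θ) * ((2:ℝ) ^ ((n:ℝ) * (a * θ)) *
            ((4:ℝ) ^ (-(b * θ)) * (((2:ℝ) ^ ((n:ℝ)) + 2 ^ ((n:ℝ) * l1) + 2 ^ ((n:ℝ) * l2)) ^ (2 - b * θ)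
              / (2 ^ ((n:ℝ) * l1) * 2 ^ ((n:ℝ) * l2))))) := by
            rw [show (4:ℝ) ^ (b * θ) * ((2:ℝ) ^ ((n:ℝ) * (a * θ)) *
              ((4:ℝ) ^ (-(b * θ)) * (((2:ℝ) ^ ((n:ℝ)) + 2 ^ ((n:ℝ) * l1) + 2 ^ ((n:ℝ) * l2)) ^ (2 - b * θ)
                / (2 ^ ((n:ℝ) * l1) * 2 ^ ((n:ℝ) * l2)))))
              = ((4:ℝ) ^ (b * θ) * 4 ^ (-(b * θ))) * ((2:ℝ) ^ ((n:ℝ) * (a * θ)) *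
                (((2:ℝ) ^ ((n:ℝ)) + 2 ^ ((n:ℝ) * l1) + 2 ^ ((n:ℝ) * l2)) ^ (2 - b * θ)
                  / (2 ^ ((n:ℝ) * l1) * 2 ^ ((n:ℝ) * l2)))) by ring, h44, one_mul]
        _ ≤ (4:ℝ) ^ (b * θ) * ((2:ℝ) ^ ((n:ℝ) * (a * θ)) * ∑' m : ℤ × ℤ,
            ((2:ℝ) ^ ((n:ℝ)) + (2:ℝ) ^ ((n:ℝ) * l1) + (2:ℝ) ^ ((n:ℝ) * l2)
              + (2:ℝ) ^ ((n:ℝ) * l1) * |(m.1:ℝ)|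
              + (2:ℝ) ^ ((n:ℝ) * l2) * |(m.2:ℝ)|) ^ (-(b * θ))) := by
            apply mul_le_mul_of_nonneg_left _ (Real.rpow_nonneg (by norm_num) _)
            apply mul_le_mul_of_nonneg_left _ (Real.rpow_nonneg (by norm_num) _)
            exact hge
    obtain ⟨hα, hβ⟩ := (aux_D_iff l1 l2 (a * θ) (b * θ) h12 h2 hp2).1 hD
    refine ⟨hp2, ?_, ?_⟩
    · have h' : l2 - l1 < (a - b * l1) * θ := by nlinarith [hβ]
      have := (div_lt_iff₀ hθ).2 h'
      linarith
    · have h' : (a - b) * θ < l1 + l2 - 2 := by nlinarith [hα]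
      have := (lt_div_iff₀ hθ).2 h'
      linarith
  · rintro ⟨hp2, hlow, hhigh⟩
    have h1' : l2 - l1 < (a - b * l1) * θ := (div_lt_iff₀ hθ).1 (by linarith)
    have h2' : (a - b) * θ < l1 + l2 - 2 := (lt_div_iff₀ hθ).1 (by linarith)
    have hα : a * θ + (2 - b * θ) - l1 - l2 < 0 := by nlinarith
    have hβ : 0 < a * θ + (2 - b * θ) * l1 - l1 - l2 := by nlinarith
    have hD : Summable (fun n : ℤ => (2:ℝ) ^ ((n:ℝ) * (a * θ)) *
        (((2:ℝ) ^ ((n:ℝ)) + 2 ^ ((n:ℝ) * l1) + 2 ^ ((n:ℝ) * l2)) ^ (2 - b * θ)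
          / (2 ^ ((n:ℝ) * l1) * 2 ^ ((n:ℝ) * l2)))) :=
      (aux_D_iff l1 l2 (a * θ) (b * θ) h12 h2 hp2).2 ⟨hα, hβ⟩
    apply (summable_prod_of_nonneg hg0).2
    constructor
    · intro n
      exact (aux_2d_summable hp2 (by positivity) (by positivity)
        (hBle n) (hCle n)).mul_left ((2:ℝ) ^ ((n:ℝ) * (a * θ)))
    · apply Summable.of_nonneg_of_le (fun n => tsum_nonneg (fun m => by positivity))
        (fun n => ?_) (hD.mul_left ((2 * ((b * θ / 2) / (b * θ / 2 - 1))) ^ 2))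
      have hle := aux_2d_tsum_le (p := b * θ)
        (c := (2:ℝ) ^ ((n:ℝ)) + (2:ℝ) ^ ((n:ℝ) * l1) + (2:ℝ) ^ ((n:ℝ) * l2))
        (B := (2:ℝ) ^ ((n:ℝ) * l1)) (C := (2:ℝ) ^ ((n:ℝ) * l2))
        hp2 (by positivity) (by positivity) (hBle n) (hCle n)
      have e1 : (∑' m : ℤ × ℤ, (2:ℝ) ^ ((n:ℝ) * (a * θ)) *
          ((2:ℝ) ^ ((n:ℝ)) + (2:ℝ) ^ ((n:ℝ) * l1) + (2:ℝ) ^ ((n:ℝ) * l2)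
            + (2:ℝ) ^ ((n:ℝ) * l1) * |(m.1:ℝ)|
            + (2:ℝ) ^ ((n:ℝ) * l2) * |(m.2:ℝ)|) ^ (-(b * θ)))
          = (2:ℝ) ^ ((n:ℝ) * (a * θ)) * ∑' m : ℤ × ℤ,
            ((2:ℝ) ^ ((n:ℝ)) + (2:ℝ) ^ ((n:ℝ) * l1) + (2:ℝ) ^ ((n:ℝ) * l2)
              + (2:ℝ) ^ ((n:ℝ) * l1) * |(m.1:ℝ)|
              + (2:ℝ) ^ ((n:ℝ) * l2) * |(m.2:ℝ)|) ^ (-(b * θ)) := tsum_mul_left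
      rw [e1]
      calc (2:ℝ) ^ ((n:ℝ) * (a * θ)) * ∑' m : ℤ × ℤ,
            ((2:ℝ) ^ ((n:ℝ)) + (2:ℝ) ^ ((n:ℝ) * l1) + (2:ℝ) ^ ((n:ℝ) * l2)
              + (2:ℝ) ^ ((n:ℝ) * l1) * |(m.1:ℝ)|
              + (2:ℝ) ^ ((n:ℝ) * l2) * |(m.2:ℝ)|) ^ (-(b * θ))
          ≤ (2:ℝ) ^ ((n:ℝ) * (a * θ)) * ((2 * ((b * θ / 2) / (b * θ / 2 - 1))) ^ 2 *
            (((2:ℝ) ^ ((n:ℝ)) + (2:ℝ) ^ ((n:ℝ) * l1) + (2:ℝ) ^ ((n:ℝ) * l2)) ^ (2 - b * θ)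
              / ((2:ℝ) ^ ((n:ℝ) * l1) * (2:ℝ) ^ ((n:ℝ) * l2)))) :=
            mul_le_mul_of_nonneg_left hle (Real.rpow_nonneg (by norm_num) _)
        _ = (2 * ((b * θ / 2) / (b * θ / 2 - 1))) ^ 2 * ((2:ℝ) ^ ((n:ℝ) * (a * θ)) *
            (((2:ℝ) ^ ((n:ℝ)) + 2 ^ ((n:ℝ) * l1) + 2 ^ ((n:ℝ) * l2)) ^ (2 - b * θ)
              / (2 ^ ((n:ℝ) * l1) * 2 ^ ((n:ℝ) * l2)))) := by ring
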